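/- Let T be a tree on a finite vertex type, let β and γ be real numbers, let H(T) = β·D(T) + γ·A(T), and let v be a vertex of T. Then det(x·I − H(T)) = (x − β·d(v))·det(x·I − H_v(T)) − γ²·Σ_{u ∈ N(v)} det(x·I − H_{uv}(T)). -/

import Mathlib

open Polynomial Matrix

attribute [local instance] Classical.propDecidable

noncomputable section

/-- The permanent of a square matrix: `per M = ∑_{σ} ∏_i M i (σ i)`. -/
def Matrix.per {n R : Type*} [Fintype n] [DecidableEq n] [CommRing R]
    (M : Matrix n n R) : R :=
  ∑ σ : Equiv.Perm n, ∏ i, M i (σ i)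

/-- The characteristic polynomial `φ(M) = det (x·I - M)`. -/
def phi {n R : Type*} [Fintype n] [DecidableEq n] [CommRing R]
    (M : Matrix n n (Polynomial R)) : Polynomial R :=
  ((Polynomial.X : Polynomial R) • (1 : Matrix n n (Polynomial R)) - M).det

/-- The permanental polynomial `ψ(M) = per (x·I - M)`. -/
def psi {n R : Type*} [Fintype n] [DecidableEq n] [CommRing R]
    (M : Matrix n n (Polynomial R)) : Polynomial R :=
  ((Polynomial.X : Polynomial R) • (1 : Matrix n n (Polynomial R)) - M).per

variable {V : Type*}

/-- The principal submatrix of `M` obtained by deleting the rows and columns indexed by `S`. -/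
def delSub {R : Type*} (M : Matrix V V R) (S : Set V) :
    Matrix {w : V // w ∉ S} {w : V // w ∉ S} R :=
  M.submatrix Subtype.val Subtype.val

/-- `C` is a cycle of `G`: a subgraph of `G` that is connected, has nonempty vertex set,
and in which every vertex of `C` has degree exactly `2` in `C`. -/
def IsCycleSub (G : SimpleGraph V) (C : G.Subgraph) : Prop :=
  C.Connected ∧ C.verts.Nonempty ∧ ∀ w ∈ C.verts, (C.neighborSet w).ncard = 2

variable [Fintype V] [DecidableEq V]

/-- The degree diagonal matrix `D(G)` of a graph. -/
def degMat (R : Type*) [CommRing R] (G : SimpleGraph V) [DecidableRel G.Adj] :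
    Matrix V V R :=
  Matrix.diagonal fun w => (G.degree w : R)

/-- The linear combination matrix `H(G) = β·D(G) + γ·A(G)` over `ℝ[x]`. -/
def hMat (β γ : ℝ) (G : SimpleGraph V) [DecidableRel G.Adj] :
    Matrix V V (Polynomial ℝ) :=
  Polynomial.C β • degMat (Polynomial ℝ) G + Polynomial.C γ • G.adjMatrix (Polynomial ℝ)

section TreeProof

variable [Fintype V] [DecidableEq V]

lemma perm_orbit_contra {T : SimpleGraph V}
    (hT : T.IsAcyclic) (σ : Equiv.Perm V) (v : V) (h1 : σ v ≠ v) (h2 : σ (σ v) ≠ v)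
    (hadj : ∀ i, σ i ≠ i → T.Adj i (σ i)) : False := by
  classical
  have hex : ∃ n, 0 < n ∧ (σ ^ n) v = v :=
    ⟨orderOf σ, orderOf_pos σ, by simp [pow_orderOf_eq_one]⟩
  set m := Nat.find hex with hm_def
  obtain ⟨hm_pos, hm_eq⟩ := Nat.find_spec hex
  rw [← hm_def] at hm_pos hm_eq
  have h_ne : ∀ k, 0 < k → k < m → (σ ^ k) v ≠ v := by
    intro k hk hkm h
    exact Nat.find_min hex hkm ⟨hk, h⟩
  have hfix : ∀ k, k < m → σ ((σ ^ k) v) ≠ (σ ^ k) v := by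
    intro k hk hfx
    rcases Nat.eq_zero_or_pos k with hk0 | hk0
    · subst hk0; simp at hfx; exact h1 hfx
    have key : ∀ j, (σ ^ j) ((σ ^ k) v) = (σ ^ k) v := by
      intro j
      induction j with
      | zero => simp
      | succ j ih => rw [pow_succ, Equiv.Perm.mul_apply, hfx, ih]
    have hmk : (σ ^ m) v = (σ ^ (m - k)) ((σ ^ k) v) := by
      rw [← Equiv.Perm.mul_apply, ← pow_add, Nat.sub_add_cancel hk.le]
    rw [hm_eq, key] at hmk
    exact h_ne k hk0 hk hmk.symm
  have hm1 : m ≠ 1 := by intro h; apply h1; simpa [h] using hm_eq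
  have hm2 : m ≠ 2 := by intro h; apply h2; rw [h] at hm_eq; simpa [pow_succ] using hm_eq
  have hm3 : 2 < m := by omega
  have hW : ∀ k, 1 ≤ k → k ≤ m - 1 → ∃ W : T.Walk (σ v) ((σ ^ k) v), v ∉ W.support := by
    intro k
    induction k with
    | zero => omega
    | succ k ih =>
      intro hk1 hk2
      rcases Nat.eq_zero_or_pos k with hk0 | hk0
      · subst hk0
        refine ⟨(SimpleGraph.Walk.nil : T.Walk (σ v) (σ v)).copy rfl (by rw [pow_one]), ?_⟩
        simp [Ne.symm h1]
      · obtain ⟨W, hWs⟩ := ih hk0 (by omega)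
        have hadjk : T.Adj ((σ ^ k) v) ((σ ^ (k + 1)) v) := by
          have := hadj _ (hfix k (by omega))
          rwa [pow_succ', Equiv.Perm.mul_apply]
        refine ⟨W.concat hadjk, ?_⟩
        rw [SimpleGraph.Walk.support_concat]
        simp only [List.concat_eq_append, List.mem_append, List.mem_singleton]
        rintro (h | h)
        · exact hWs h
        · exact h_ne (k + 1) (by omega) (by omega) h.symm
  set w := (σ ^ (m - 1)) v with hw_def
  obtain ⟨W, hWs⟩ := hW (m - 1) (by omega) le_rfl
  have hadj_vu : T.Adj v (σ v) := hadj v h1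
  have hw_ne : w ≠ v := h_ne _ (by omega) (by omega)
  have hσw : σ w = v := by
    have : (σ ^ m) v = σ ((σ ^ (m - 1)) v) := by
      conv_lhs => rw [show m = (m - 1) + 1 by omega]
      rw [pow_succ', Equiv.Perm.mul_apply]
    rw [hm_eq] at this; exact this.symm
  have hadj_wv : T.Adj w v := by
    have := hadj w (by rw [hσw]; exact Ne.symm hw_ne)
    rwa [hσw] at this
  have hune : σ v ≠ w := by
    intro h; apply h2; rw [h, hσw]
  have hp1 : (SimpleGraph.Walk.cons hadj_vu W.bypass).IsPath := by
    rw [SimpleGraph.Walk.cons_isPath_iff]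
    exact ⟨W.bypass_isPath, fun hv => hWs (W.support_bypass_subset hv)⟩
  have huniq := SimpleGraph.isAcyclic_iff_path_unique.mp hT
    ⟨SimpleGraph.Walk.cons hadj_vu W.bypass, hp1⟩ (SimpleGraph.Path.singleton hadj_wv.symm)
  have hsupp := congrArg (fun p : T.Path v w => p.1.support) huniq
  simp only [SimpleGraph.Path.singleton, SimpleGraph.Walk.support_cons,
    SimpleGraph.Walk.support_nil] at hsupp
  have hlist : W.bypass.support = [w] := by simpa using hsupp
  have := congrArg List.head? hlist
  rw [SimpleGraph.Walk.support_eq_cons] at this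
  simp at this
  rw [SimpleGraph.Walk.support_eq_cons] at this; simp only [List.head?_cons, Option.some.injEq] at this
  exact hune this

variable {R : Type*} [CommRing R]

lemma ofSubtype_inj {p : V → Prop} [DecidablePred p] {τ₁ τ₂ : Equiv.Perm (Subtype p)}
    (h : Equiv.Perm.ofSubtype τ₁ = Equiv.Perm.ofSubtype τ₂) : τ₁ = τ₂ := by
  ext x
  have := DFunLike.congr_fun h (x : V)
  simpa [Equiv.Perm.ofSubtype_apply_coe, Subtype.ext_iff] using this

lemma sum_perm_fixed (M : Matrix V V R) (v : V) :
    ∑ σ ∈ Finset.univ.filter (fun σ : Equiv.Perm V => σ v = v),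
        ((Equiv.Perm.sign σ : ℤ) : R) * ∏ i, M (σ i) i
      = M v v * (delSub M {v}).det := by
  classical
  rw [Matrix.det_apply', Finset.mul_sum]
  have hpv : ¬ (v ∉ ({v} : Set V)) := by simp
  refine (Finset.sum_bij
    (fun (τ : Equiv.Perm {w : V // w ∉ ({v} : Set V)}) _ => Equiv.Perm.ofSubtype τ)
    ?_ ?_ ?_ ?_).symm
  · intro τ _
    simp only [Finset.mem_filter, Finset.mem_univ, true_and]
    exact Equiv.Perm.ofSubtype_apply_of_not_mem τ hpv
  · intro τ₁ _ τ₂ _ h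
    exact ofSubtype_inj h
  · intro σ hσ
    have hσv : σ v = v := (Finset.mem_filter.mp hσ).2
    have h₁ : ∀ x, (x ∉ ({v} : Set V)) ↔ (σ x ∉ ({v} : Set V)) := by
      intro x
      simp only [Set.mem_singleton_iff, not_iff_not]
      constructor
      · intro h; subst h; exact hσv
      · intro h; exact σ.injective (by rw [hσv, h])
    refine ⟨Equiv.Perm.subtypePerm σ (fun x => (h₁ x).symm), Finset.mem_univ _, ?_⟩
    show Equiv.Perm.ofSubtype _ = σ
    apply Equiv.Perm.ofSubtype_subtypePerm
    intro x hx
    simp only [Set.mem_singleton_iff]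
    intro h; subst h; exact hx hσv
  · intro τ _
    have hsign : Equiv.Perm.sign (Equiv.Perm.ofSubtype τ) = Equiv.Perm.sign τ :=
      Equiv.Perm.sign_ofSubtype τ
    rw [hsign]
    have hprod : ∏ i, M (Equiv.Perm.ofSubtype τ i) i
        = M v v * ∏ i : {w : V // w ∉ ({v} : Set V)}, (delSub M {v}) (τ i) i := by
      rw [← Finset.mul_prod_erase Finset.univ _ (Finset.mem_univ v),
        Equiv.Perm.ofSubtype_apply_of_not_mem τ hpv]
      congr 1
      rw [Finset.prod_subtype (p := fun w => w ∉ ({v} : Set V)) (Finset.univ.erase v)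
        (fun x => by simp [Set.mem_singleton_iff])
        (fun i => M (Equiv.Perm.ofSubtype τ i) i)]
      apply Finset.prod_congr rfl
      intro x _
      have hx' : (x : V) ∉ ({v} : Set V) := x.2
      rw [Equiv.Perm.ofSubtype_apply_of_mem τ hx']
      rfl
    rw [hprod]
    ring

lemma sum_perm_swap (M : Matrix V V R) {u v : V} (huv : u ≠ v) :
    ∑ σ ∈ Finset.univ.filter
        (fun σ : Equiv.Perm V => (σ v ≠ v ∧ σ (σ v) = v) ∧ σ v = u),
        ((Equiv.Perm.sign σ : ℤ) : R) * ∏ i, M (σ i) i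
      = -(M u v * M v u * (delSub M {u, v}).det) := by
  classical
  rw [Matrix.det_apply', Finset.mul_sum, ← Finset.sum_neg_distrib]
  have hqu : ¬ (u ∉ ({u, v} : Set V)) := by simp
  have hqv : ¬ (v ∉ ({u, v} : Set V)) := by simp
  refine (Finset.sum_bij
    (fun (τ : Equiv.Perm {w : V // w ∉ ({u, v} : Set V)}) _ =>
      Equiv.swap u v * Equiv.Perm.ofSubtype τ)
    ?_ ?_ ?_ ?_).symm
  · intro τ _
    simp only [Finset.mem_filter, Finset.mem_univ, true_and]
    have h1 : (Equiv.swap u v * Equiv.Perm.ofSubtype τ) v = u := by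
      rw [Equiv.Perm.mul_apply, Equiv.Perm.ofSubtype_apply_of_not_mem τ hqv,
        Equiv.swap_apply_right]
    have h2 : (Equiv.swap u v * Equiv.Perm.ofSubtype τ) u = v := by
      rw [Equiv.Perm.mul_apply, Equiv.Perm.ofSubtype_apply_of_not_mem τ hqu,
        Equiv.swap_apply_left]
    refine ⟨⟨?_, ?_⟩, h1⟩
    · rw [h1]; exact huv
    · rw [h1, h2]
  · intro τ₁ _ τ₂ _ h
    exact ofSubtype_inj (mul_left_cancel h)
  · intro σ hσ
    obtain ⟨⟨hσvne, hret⟩, hσv⟩ := Finset.mem_filter.mp hσ |>.2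
    have hσu : σ u = v := by rw [← hσv]; exact hret
    have hπv : (Equiv.swap u v * σ) v = v := by
      rw [Equiv.Perm.mul_apply, hσv, Equiv.swap_apply_left]
    have hπu : (Equiv.swap u v * σ) u = u := by
      rw [Equiv.Perm.mul_apply, hσu, Equiv.swap_apply_right]
    have h₁ : ∀ x, (x ∉ ({u, v} : Set V)) ↔ ((Equiv.swap u v * σ) x ∉ ({u, v} : Set V)) := by
      intro x
      simp only [Set.mem_insert_iff, Set.mem_singleton_iff, not_iff_not]
      constructor
      · rintro (h | h) <;> subst h
        · left; exact hπu
        · right; exact hπv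
      · rintro (h | h)
        · left; exact (Equiv.swap u v * σ).injective (by rw [hπu, h])
        · right; exact (Equiv.swap u v * σ).injective (by rw [hπv, h])
    refine ⟨Equiv.Perm.subtypePerm (Equiv.swap u v * σ) (fun x => (h₁ x).symm), Finset.mem_univ _, ?_⟩
    show Equiv.swap u v * Equiv.Perm.ofSubtype _ = σ
    have : Equiv.Perm.ofSubtype (Equiv.Perm.subtypePerm (p := fun x => x ∉ ({u, v} : Set V)) (Equiv.swap u v * σ) (fun x => (h₁ x).symm))
        = Equiv.swap u v * σ := by
      apply Equiv.Perm.ofSubtype_subtypePerm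
      intro x hx
      simp only [Set.mem_insert_iff, Set.mem_singleton_iff]
      rintro (h | h) <;> subst h
      · exact hx hπu
      · exact hx hπv
    rw [this, ← mul_assoc, Equiv.swap_mul_self, one_mul]
  · intro τ _
    have hsign : Equiv.Perm.sign (Equiv.swap u v * Equiv.Perm.ofSubtype τ)
        = - Equiv.Perm.sign τ := by
      rw [_root_.map_mul, Equiv.Perm.sign_swap huv, Equiv.Perm.sign_ofSubtype, neg_mul, one_mul]
    rw [hsign]
    have hτv : (Equiv.swap u v * Equiv.Perm.ofSubtype τ) v = u := by
      rw [Equiv.Perm.mul_apply, Equiv.Perm.ofSubtype_apply_of_not_mem τ hqv,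
        Equiv.swap_apply_right]
    have hτu : (Equiv.swap u v * Equiv.Perm.ofSubtype τ) u = v := by
      rw [Equiv.Perm.mul_apply, Equiv.Perm.ofSubtype_apply_of_not_mem τ hqu,
        Equiv.swap_apply_left]
    have hprod : ∏ i, M ((Equiv.swap u v * Equiv.Perm.ofSubtype τ) i) i
        = M u v * M v u *
          ∏ i : {w : V // w ∉ ({u, v} : Set V)}, (delSub M {u, v}) (τ i) i := by
      rw [← Finset.mul_prod_erase Finset.univ _ (Finset.mem_univ v), hτv]
      rw [← Finset.mul_prod_erase (Finset.univ.erase v) _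
        (Finset.mem_erase.mpr ⟨huv, Finset.mem_univ u⟩), hτu]
      rw [Finset.prod_subtype (p := fun w => w ∉ ({u, v} : Set V))
        ((Finset.univ.erase v).erase u)
        (fun x => by
          simp only [Finset.mem_erase, Finset.mem_univ, and_true, Set.mem_insert_iff,
            Set.mem_singleton_iff, not_or])
        (fun i => M ((Equiv.swap u v * Equiv.Perm.ofSubtype τ) i) i)]
      have : ∀ i : {w : V // w ∉ ({u, v} : Set V)},
          M ((Equiv.swap u v * Equiv.Perm.ofSubtype τ) i) i = (delSub M {u, v}) (τ i) i := by
        intro i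
        have hi : (i : V) ∉ ({u, v} : Set V) := i.2
        have hτi : ((τ i : Subtype _) : V) ∉ ({u, v} : Set V) := (τ i).2
        have hne1 : ((τ i : Subtype _) : V) ≠ u := by
          intro h; exact hτi (by rw [h]; exact Set.mem_insert u {v})
        have hne2 : ((τ i : Subtype _) : V) ≠ v := by
          intro h; exact hτi (by rw [h]; exact Set.mem_insert_iff.mpr (Or.inr rfl))
        rw [Equiv.Perm.mul_apply, Equiv.Perm.ofSubtype_apply_of_mem τ hi,
          Equiv.swap_apply_of_ne_of_ne hne1 hne2]
        rfl
      rw [Finset.prod_congr rfl (fun i _ => this i)]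
      ring
    rw [hprod]
    push_cast
    ring

end TreeProof

section EntryLemmas

variable [Fintype V] [DecidableEq V] (T : SimpleGraph V) [DecidableRel T.Adj] (β γ : ℝ)

lemma hM_diag (w : V) :
    ((Polynomial.X : Polynomial ℝ) • (1 : Matrix V V (Polynomial ℝ)) - hMat β γ T) w w
      = Polynomial.X - Polynomial.C β * (T.degree w : Polynomial ℝ) := by
  simp [hMat, degMat, Matrix.sub_apply, Matrix.smul_apply, Matrix.add_apply,
    Matrix.one_apply_eq, Matrix.diagonal_apply_eq, smul_eq_mul]

lemma hM_adj {i j : V} (h : T.Adj i j) :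
    ((Polynomial.X : Polynomial ℝ) • (1 : Matrix V V (Polynomial ℝ)) - hMat β γ T) i j
      = -Polynomial.C γ := by
  have hne : i ≠ j := h.ne
  simp [hMat, degMat, Matrix.sub_apply, Matrix.smul_apply, Matrix.add_apply,
    Matrix.one_apply_ne hne, Matrix.diagonal_apply_ne _ hne, h, smul_eq_mul]

lemma hM_nonadj {i j : V} (hne : i ≠ j) (h : ¬ T.Adj i j) :
    ((Polynomial.X : Polynomial ℝ) • (1 : Matrix V V (Polynomial ℝ)) - hMat β γ T) i j
      = 0 := by
  simp [hMat, degMat, Matrix.sub_apply, Matrix.smul_apply, Matrix.add_apply,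
    Matrix.one_apply_ne hne, Matrix.diagonal_apply_ne _ hne, h, smul_eq_mul]

lemma phi_delSub (S : Set V) [inst : Fintype {w : V // w ∉ S}] :
    phi (delSub (hMat β γ T) S)
      = (delSub ((Polynomial.X : Polynomial ℝ) • (1 : Matrix V V (Polynomial ℝ))
          - hMat β γ T) S).det := by
  unfold phi
  congr 1
  ext i j
  by_cases h : i = j
  · subst h
    simp [delSub, Matrix.sub_apply, Matrix.smul_apply, Matrix.one_apply_eq]
  · have h' : (i : V) ≠ (j : V) := fun hh => h (Subtype.ext hh)
    simp [delSub, Matrix.sub_apply, Matrix.smul_apply, Matrix.one_apply_ne h,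
      Matrix.one_apply_ne h']

end EntryLemmas

theorem tree_det_vertex_recursion
    {V : Type*} [Fintype V] [DecidableEq V]
    (T : SimpleGraph V) [DecidableRel T.Adj] (hT : T.IsTree) (β γ : ℝ) (v : V) :
    phi (hMat β γ T) =
      (Polynomial.X - Polynomial.C β * (T.degree v : Polynomial ℝ)) * phi (delSub (hMat β γ T) {v})
        - Polynomial.C (γ ^ 2) * ∑ u ∈ T.neighborFinset v, phi (delSub (hMat β γ T) {u, v}) := by
  classical
  set f : Equiv.Perm V → Polynomial ℝ :=
    fun σ => ((Equiv.Perm.sign σ : ℤ) : Polynomial ℝ) *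
      ∏ i, ((Polynomial.X : Polynomial ℝ) • (1 : Matrix V V (Polynomial ℝ)) - hMat β γ T) (σ i) i
    with hf_def
  have hvanish : ∀ σ : Equiv.Perm V, σ v ≠ v → σ (σ v) ≠ v → f σ = 0 := by
    intro σ hσ1 hσ2
    by_cases hall : ∀ i, σ i ≠ i → T.Adj i (σ i)
    · exact (perm_orbit_contra hT.IsAcyclic σ v hσ1 hσ2 hall).elim
    · push_neg at hall
      obtain ⟨i, hi1, hi2⟩ := hall
      have hzero : ((Polynomial.X : Polynomial ℝ) • (1 : Matrix V V (Polynomial ℝ))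
          - hMat β γ T) (σ i) i = 0 :=
        hM_nonadj T β γ hi1 (fun h => hi2 h.symm)
      rw [hf_def]
      simp only
      have hp : (∏ x : V, ((Polynomial.X : Polynomial ℝ) • (1 : Matrix V V (Polynomial ℝ))
          - hMat β γ T) (σ x) x) = 0 := Finset.prod_eq_zero (Finset.mem_univ i) hzero
      rw [hp, mul_zero]
  have hphi : phi (hMat β γ T)
      = ((Polynomial.X : Polynomial ℝ) • (1 : Matrix V V (Polynomial ℝ)) - hMat β γ T).det := rfl
  rw [hphi, Matrix.det_apply']
  rw [← Finset.sum_filter_add_sum_filter_not Finset.univ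
    (fun σ : Equiv.Perm V => σ v = v) f]
  have h1 := sum_perm_fixed
    ((Polynomial.X : Polynomial ℝ) • (1 : Matrix V V (Polynomial ℝ)) - hMat β γ T) v
  rw [h1]
  -- second sum
  have h2 : ∑ σ ∈ Finset.univ.filter (fun σ : Equiv.Perm V => ¬ σ v = v), f σ
      = ∑ u ∈ T.neighborFinset v,
          -(Polynomial.C γ * Polynomial.C γ *
            (delSub ((Polynomial.X : Polynomial ℝ) • (1 : Matrix V V (Polynomial ℝ))
              - hMat β γ T) {u, v}).det) := by
    rw [← Finset.sum_filter_add_sum_filter_not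
        (Finset.univ.filter (fun σ : Equiv.Perm V => ¬ σ v = v))
        (fun σ => σ (σ v) = v) f]
    have hz : ∑ σ ∈ (Finset.univ.filter (fun σ : Equiv.Perm V => ¬ σ v = v)).filter
        (fun σ => ¬ σ (σ v) = v), f σ = 0 := by
      apply Finset.sum_eq_zero
      intro σ hσ
      simp only [Finset.mem_filter] at hσ
      exact hvanish σ hσ.1.2 hσ.2
    rw [hz, add_zero, Finset.filter_filter]
    rw [← Finset.sum_fiberwise_of_maps_to (t := Finset.univ)
      (g := fun σ : Equiv.Perm V => σ v)
      (fun σ _ => Finset.mem_univ _) f]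
    rw [← Finset.sum_subset (Finset.subset_univ (T.neighborFinset v)) ?hout]
    case hout =>
      intro u _ hu
      apply Finset.sum_eq_zero
      intro σ hσ
      simp only [Finset.mem_filter] at hσ
      obtain ⟨⟨_, hσvne, _⟩, hσv⟩ := hσ
      have huv : u ≠ v := by rw [← hσv]; exact hσvne
      have hnadj : ¬ T.Adj u v := fun h => hu (T.mem_neighborFinset v u |>.mpr h.symm)
      have hzero : ((Polynomial.X : Polynomial ℝ) • (1 : Matrix V V (Polynomial ℝ))
          - hMat β γ T) (σ v) v = 0 := by
        rw [hσv]; exact hM_nonadj T β γ huv hnadj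
      rw [hf_def]
      simp only
      have hp : (∏ x : V, ((Polynomial.X : Polynomial ℝ) • (1 : Matrix V V (Polynomial ℝ))
          - hMat β γ T) (σ x) x) = 0 := Finset.prod_eq_zero (Finset.mem_univ v) hzero
      rw [hp, mul_zero]
    apply Finset.sum_congr rfl
    intro u hu
    have hadj : T.Adj v u := (T.mem_neighborFinset v u).mp hu
    have huv : u ≠ v := hadj.ne'
    rw [Finset.filter_filter]
    have := sum_perm_swap
      ((Polynomial.X : Polynomial ℝ) • (1 : Matrix V V (Polynomial ℝ)) - hMat β γ T) huv
    rw [hM_adj T β γ hadj.symm, hM_adj T β γ hadj] at this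
    rw [this]
    ring
  rw [h2, hM_diag T β γ v]
  rw [Finset.sum_neg_distrib, ← Finset.mul_sum]
  have bv : phi (delSub (hMat β γ T) ({v} : Set V))
      = (delSub ((Polynomial.X : Polynomial ℝ) • (1 : Matrix V V (Polynomial ℝ))
          - hMat β γ T) {v}).det := phi_delSub T β γ {v}
  have bsum : ∑ u ∈ T.neighborFinset v, phi (delSub (hMat β γ T) {u, v})
      = ∑ u ∈ T.neighborFinset v,
          (delSub ((Polynomial.X : Polynomial ℝ) • (1 : Matrix V V (Polynomial ℝ))
            - hMat β γ T) {u, v}).det :=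
    Finset.sum_congr rfl (fun u _ => phi_delSub T β γ {u, v})
  rw [bv, bsum]
  have hC : Polynomial.C (γ ^ 2) = Polynomial.C γ * Polynomial.C γ := by
    rw [pow_two, Polynomial.C_mul]
  rw [hC]
  ring
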